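/- Let P(x) be a monic polynomial of degree m over C and suppose P(x)^2 + 1 factors as ∏_{i=1}^{k} (x - x_i)^{m_i} with distinct roots x_1,...,x_k and multiplicities m_i ≥ 1. Then the number of distinct roots satisfies k ≥ m + 1. -/
import Mathlib


open Polynomial

/-- If P is monic of degree m over ℂ and P^2 + 1 = ∏ (x - x_i)^{m_i} with distinct
roots x_i and multiplicities m_i ≥ 1, then the number k of distinct roots satisfies
k ≥ m + 1. -/
theorem stmt2 (m k : ℕ) (hm : 1 ≤ m) (P : Polynomial ℂ) (hP : P.Monic)
    (hdeg : P.natDegree = m) (x : Fin k → ℂ) (mi : Fin k → ℕ)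
    (hx : Function.Injective x) (hmi : ∀ i, 1 ≤ mi i)
    (hfac : P ^ 2 + 1 = ∏ i, (X - C (x i)) ^ mi i) :
    m + 1 ≤ k := by
  have hPne : P ≠ 0 := hP.ne_zero
  have hP' : derivative P ≠ 0 := by
    intro h
    have := natDegree_eq_zero_of_derivative_eq_zero h
    omega
  have hdegP' : (derivative P).natDegree ≤ m - 1 := by
    simpa [hdeg] using natDegree_derivative_le P
  -- sum of multiplicities is 2m
  have hdegQ : (P ^ 2 + 1).natDegree = 2 * m := by
    have h1 : (P ^ 2).natDegree = 2 * m := by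
      rw [hP.natDegree_pow, hdeg]
    rw [natDegree_add_eq_left_of_natDegree_lt]
    · exact h1
    · rw [h1, natDegree_one]; omega
  have hsum : ∑ i, mi i = 2 * m := by
    have h : (∏ i, (X - C (x i)) ^ mi i).natDegree = ∑ i, mi i := by
      rw [natDegree_prod]
      · simp [natDegree_pow]
      · intro i _
        exact pow_ne_zero _ (X_sub_C_ne_zero _)
    rw [← h, ← hfac, hdegQ]
  -- x i is not a root of P
  have hroot : ∀ i, eval (x i) P ≠ 0 := by
    intro i hP0
    have h0 : eval (x i) (P ^ 2 + 1) = 0 := by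
      rw [hfac, eval_prod]
      refine Finset.prod_eq_zero (Finset.mem_univ i) ?_
      have : mi i ≠ 0 := by have := hmi i; omega
      simp [pow_eq_zero_iff this]
    simp [hP0] at h0
  -- (X - C (x i))^(mi i - 1) divides P'
  have hdvd : ∀ i, (X - C (x i)) ^ (mi i - 1) ∣ derivative P := by
    intro i
    have h1 : (X - C (x i)) ^ mi i ∣ P ^ 2 + 1 := by
      rw [hfac]; exact Finset.dvd_prod_of_mem _ (Finset.mem_univ i)
    have h2 : (X - C (x i)) ^ (mi i - 1) ∣ derivative (P ^ 2 + 1) :=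
      pow_sub_one_dvd_derivative_of_pow_dvd h1
    have h3 : derivative (P ^ 2 + 1) = P * (C 2 * derivative P) := by
      simp [derivative_pow]
      ring
    rw [h3] at h2
    have hndvd : ¬ (X - C (x i)) ∣ P := by
      rw [dvd_iff_isRoot]
      exact hroot i
    have hcop : IsCoprime ((X - C (x i)) ^ (mi i - 1)) P := by
      refine IsCoprime.pow_left ?_
      rcases EuclideanDomain.dvd_or_coprime (X - C (x i)) P
        (irreducible_X_sub_C (x i)) with h | h
      · exact absurd h hndvd
      · exact h
    have h4 : (X - C (x i)) ^ (mi i - 1) ∣ C 2 * derivative P :=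
      hcop.dvd_of_dvd_mul_left h2
    refine h4.trans ⟨C (2⁻¹ : ℂ), ?_⟩
    rw [mul_comm (C 2), mul_assoc, ← C_mul]
    norm_num
  -- the product divides P'
  have hprod : (∏ i, (X - C (x i)) ^ (mi i - 1)) ∣ derivative P := by
    refine Fintype.prod_dvd_of_coprime ?_ hdvd
    exact fun i j h => (pairwise_coprime_X_sub_C hx h).pow
  have hle : (∑ i, (mi i - 1)) ≤ m - 1 := by
    have h := (natDegree_le_of_dvd hprod hP').trans hdegP'
    rw [natDegree_prod] at h
    · simpa [natDegree_pow] using h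
    · intro i _
      exact pow_ne_zero _ (X_sub_C_ne_zero _)
  have hsum' : (∑ i, (mi i - 1)) + k = 2 * m := by
    have : ∑ i, (mi i - 1 + 1) = ∑ i, mi i :=
      Finset.sum_congr rfl fun i _ => Nat.sub_add_cancel (hmi i)
    rw [Finset.sum_add_distrib] at this
    simpa [hsum] using this
  omega
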